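/- Let α > 0 and β > 0, let V : S → ℝ, set λ = β(1 − log Z_V), and define p(s,a) = exp(λ/β − 1) · (Σ_b exp(A_V(s,b)/α))^{α/β − 1} · exp(A_V(s,a)/α). Then Σ_{s,a} p(s,a) = 1, and the Lagrangian L(p, V, λ) = Σ_{s,a} p(s,a) r(s,a) − α Σ_{s,a} p(s,a) log p(s,a) − (β − α) Σ_{s,a} p(s,a) log (Σ_b p(s,b)) + Σ_{s'} V(s') ( Σ_{s,a} P(s'|s,a) p(s,a) − Σ_b p(s',b) ) + λ ( Σ_{s,a} p(s,a) − 1 ) equals β · log Z_V. -/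

import Mathlib

open Finset

/-- The advantage `A_V(s,a) = r(s,a) + Σ_{s'} V(s') P(s'|s,a) − V(s)`. -/
noncomputable def Adv {S A : Type} [Fintype S]
    (P : S → A → S → ℝ) (r : S → A → ℝ) (V : S → ℝ) (s : S) (a : A) : ℝ :=
  r s a + (∑ s', V s' * P s a s') - V s

/-- The partition function `Z_V = Σ_s (Σ_a exp(A_V(s,a)/α))^{α/β}`. -/
noncomputable def Zfun {S A : Type} [Fintype S] [Fintype A]
    (P : S → A → S → ℝ) (r : S → A → ℝ) (α β : ℝ) (V : S → ℝ) : ℝ :=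
  ∑ s, (∑ a, Real.exp (Adv P r V s a / α)) ^ (α / β)

/-- with `λ = β(1 − log Z_V)` and
`p(s,a) = exp(λ/β − 1) (Σ_b exp(A_V(s,b)/α))^{α/β−1} exp(A_V(s,a)/α)`,
`p` is normalized and the Lagrangian `L(p,V,λ)` equals `β log Z_V`. -/
theorem lagrangian_dual_value {S A : Type} [Fintype S] [Fintype A]
    [Nonempty S] [Nonempty A]
    (P : S → A → S → ℝ) (hP0 : ∀ s a s', 0 ≤ P s a s')
    (hP1 : ∀ s a, (∑ s', P s a s') = 1)
    (r : S → A → ℝ) (α β : ℝ) (hα : 0 < α) (hβ : 0 < β)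
    (V : S → ℝ) (lam : ℝ) (hlam : lam = β * (1 - Real.log (Zfun P r α β V)))
    (p : S → A → ℝ)
    (hp : ∀ s a, p s a =
      Real.exp (lam / β - 1) *
        (∑ b, Real.exp (Adv P r V s b / α)) ^ (α / β - 1) *
        Real.exp (Adv P r V s a / α)) :
    (∑ s, ∑ a, p s a) = 1 ∧
      ((∑ s, ∑ a, p s a * r s a)
        - α * ∑ s, ∑ a, p s a * Real.log (p s a)
        - (β - α) * ∑ s, ∑ a, p s a * Real.log (∑ b, p s b)
        + (∑ s', V s' * ((∑ s, ∑ a, P s a s' * p s a) - ∑ b, p s' b))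
        + lam * ((∑ s, ∑ a, p s a) - 1))
      = β * Real.log (Zfun P r α β V) := by
  classical
  set T : S → ℝ := fun s => ∑ b, Real.exp (Adv P r V s b / α) with hTdef
  have hTpos : ∀ s, 0 < T s := fun s =>
    Finset.sum_pos (fun b _ => Real.exp_pos _) Finset.univ_nonempty
  set Z : ℝ := Zfun P r α β V with hZdef
  have hZ : Z = ∑ s, T s ^ (α / β) := rfl
  have hZpos : 0 < Z := by
    rw [hZ]
    exact Finset.sum_pos (fun s _ => Real.rpow_pos_of_pos (hTpos s) _)
      Finset.univ_nonempty
  have hexp : Real.exp (lam / β - 1) = Z⁻¹ := by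
    rw [hlam]
    have : β * (1 - Real.log Z) / β - 1 = -Real.log Z := by
      field_simp
      ring
    rw [this, Real.exp_neg, Real.exp_log hZpos]
  have hp' : ∀ s a, p s a = Z⁻¹ * (T s ^ (α / β - 1) *
      Real.exp (Adv P r V s a / α)) := by
    intro s a
    rw [hp, hexp]; ring
  have hppos : ∀ s a, 0 < p s a := by
    intro s a
    rw [hp']
    positivity
  have hq : ∀ s, (∑ a, p s a) = Z⁻¹ * T s ^ (α / β) := by
    intro s
    simp only [hp', ← Finset.mul_sum]
    congr 1
    show T s ^ (α / β - 1) * T s = T s ^ (α / β)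
    rw [Real.rpow_sub_one (hTpos s).ne', div_mul_cancel₀ _ (hTpos s).ne']
  have hsum1 : (∑ s, ∑ a, p s a) = 1 := by
    simp only [hq, ← Finset.mul_sum, ← hZ]
    exact inv_mul_cancel₀ hZpos.ne'
  refine ⟨hsum1, ?_⟩
  have hlogp : ∀ s a, Real.log (p s a) =
      -Real.log Z + (α / β - 1) * Real.log (T s) + Adv P r V s a / α := by
    intro s a
    rw [hp', Real.log_mul (by positivity) (by positivity),
      Real.log_mul (by positivity) (Real.exp_ne_zero _),
      Real.log_inv, Real.log_rpow (hTpos s), Real.log_exp]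
    ring
  have hlogq : ∀ s, Real.log (∑ b, p s b) =
      -Real.log Z + (α / β) * Real.log (T s) := by
    intro s
    rw [hq, Real.log_mul (by positivity) (by positivity),
      Real.log_inv, Real.log_rpow (hTpos s)]
  set LT : ℝ := ∑ s, (∑ a, p s a) * Real.log (T s) with hLT
  set W : ℝ := ∑ s, ∑ a, p s a * Adv P r V s a with hW
  set R : ℝ := ∑ s, ∑ a, p s a * r s a with hR
  have h1 : ∀ c : ℝ, (∑ s, ∑ a, p s a * c) = c := by
    intro c
    simp only [← Finset.sum_mul, hsum1, one_mul]
  have h2 : ∀ c : ℝ, (∑ s, ∑ a, p s a * (c * Real.log (T s))) = c * LT := by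
    intro c
    rw [hLT, Finset.mul_sum]
    refine Finset.sum_congr rfl fun s _ => ?_
    rw [← Finset.sum_mul]
    ring
  have hA : (∑ s, ∑ a, p s a * Real.log (p s a)) =
      -Real.log Z + (α / β - 1) * LT + W / α := by
    simp only [hlogp, mul_add, Finset.sum_add_distrib]
    rw [h1, h2]
    congr 1
    rw [hW, Finset.sum_div]
    refine Finset.sum_congr rfl fun s _ => ?_
    rw [Finset.sum_div]
    refine Finset.sum_congr rfl fun a _ => ?_
    ring
  have hB : (∑ s, ∑ a, p s a * Real.log (∑ b, p s b)) =
      -Real.log Z + (α / β) * LT := by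
    simp only [hlogq, mul_add, Finset.sum_add_distrib]
    rw [h1, h2]
  have hC : (∑ s', V s' * ((∑ s, ∑ a, P s a s' * p s a) - ∑ b, p s' b))
      = W - R := by
    have hWR : W - R = ∑ s, ∑ a, p s a * ((∑ s', V s' * P s a s') - V s) := by
      rw [hW, hR, ← Finset.sum_sub_distrib]
      refine Finset.sum_congr rfl fun s _ => ?_
      rw [← Finset.sum_sub_distrib]
      refine Finset.sum_congr rfl fun a _ => ?_
      rw [Adv]; ring
    rw [hWR]
    simp only [mul_sub, Finset.sum_sub_distrib, Finset.mul_sum]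
    congr 1
    · rw [Finset.sum_comm]
      refine Finset.sum_congr rfl fun s _ => ?_
      rw [Finset.sum_comm]
      refine Finset.sum_congr rfl fun a _ => ?_
      refine Finset.sum_congr rfl fun s' _ => ?_
      ring
    · refine Finset.sum_congr rfl fun s _ => ?_
      refine Finset.sum_congr rfl fun a _ => ?_
      ring
  rw [hA, hB, hC, hsum1]
  field_simp
  ring
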